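/- Let τ > 0, let p, q be reals with q > 0 and p > max(q, 1), and let φ : [−τ, 0] → ℝ be continuous with φ(0) ≥ 1, φ(0) ≥ |φ(t)|^{q/p} for all t ∈ [−τ, 0], and φ(0) > |φ(−τ)|^{q/p}. Then any solution y of the delay differential equation y′(t) = |y(t)|^p − |y(t−τ)|^q for t > 0, with y(t) = φ(t) on [−τ, 0], blows up in finite time: the maximal interval of existence [0, T*) has T* < ∞ and y(t) → +∞ as t → T*⁻. -/

import Mathlib

open Set Filter

/-- `y` is a solution on `[0, b)` of the delay equation
`y′(t) = |y(t)|^p − |y(t−τ)|^q` with history `φ` on `[−τ, 0]`: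
`y` is continuous on `[−τ, b)`, agrees with `φ` on `[−τ, 0]`, and is
differentiable on `(0, b)` with the prescribed derivative. -/
def DelaySolOn (τ p q : ℝ) (φ y : ℝ → ℝ) (b : ℝ) : Prop :=
  ContinuousOn y (Set.Ico (-τ) b) ∧
  (∀ t ∈ Set.Icc (-τ) (0:ℝ), y t = φ t) ∧
  ∀ t ∈ Set.Ioo (0:ℝ) b, HasDerivAt y (|y t| ^ p - |y (t - τ)| ^ q) t

/-- `y` is a global solution (on `[0, ∞)`) of the delay equation with history `φ`. -/
def DelaySolGlobal (τ p q : ℝ) (φ y : ℝ → ℝ) : Prop :=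
  ContinuousOn y (Set.Ici (-τ)) ∧
  (∀ t ∈ Set.Icc (-τ) (0:ℝ), y t = φ t) ∧
  ∀ t ∈ Set.Ioi (0:ℝ), HasDerivAt y (|y t| ^ p - |y (t - τ)| ^ q) t

lemma abs_rpow_q_le {p q h x : ℝ} (hp0 : 0 < p)
    (hx : |x| ^ (q / p) ≤ h) : |x| ^ q ≤ h ^ p := by
  have h0 : (0:ℝ) ≤ |x| ^ (q / p) := Real.rpow_nonneg (abs_nonneg x) _
  have := Real.rpow_le_rpow h0 hx hp0.le
  rwa [← Real.rpow_mul (abs_nonneg x), div_mul_cancel₀ q hp0.ne'] at this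

lemma abs_rpow_q_lt {p q h x : ℝ} (hp0 : 0 < p)
    (hx : |x| ^ (q / p) < h) : |x| ^ q < h ^ p := by
  have h0 : (0:ℝ) ≤ |x| ^ (q / p) := Real.rpow_nonneg (abs_nonneg x) _
  have := Real.rpow_lt_rpow h0 hx hp0
  rwa [← Real.rpow_mul (abs_nonneg x), div_mul_cancel₀ q hp0.ne'] at this

lemma delay_mono (τ p q : ℝ) (hτ : 0 < τ) (hq : 0 < q)
    (hp : max q 1 < p)
    (φ y : ℝ → ℝ) (b : ℝ) (hb : 0 < b) (hφ0 : 1 ≤ φ 0)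
    (hφ : ∀ t ∈ Set.Icc (-τ) (0:ℝ), |φ t| ^ (q / p) ≤ φ 0)
    (hφτ : |φ (-τ)| ^ (q / p) < φ 0)
    (hsol : DelaySolOn τ p q φ y b) :
    (∀ t ∈ Ico (0:ℝ) b, 0 < |y t| ^ p - |y (t - τ)| ^ q) ∧
      StrictMonoOn y (Ico (0:ℝ) b) := by
  obtain ⟨hc, hhist, hode⟩ := hsol
  have hqp : q < p := lt_of_le_of_lt (le_max_left q 1) hp
  have hp1 : 1 < p := lt_of_le_of_lt (le_max_right q 1) hp
  have hp0 : 0 < p := lt_trans one_pos hp1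
  set G : ℝ → ℝ := fun t => |y t| ^ p - |y (t - τ)| ^ q with hGdef
  have hsub1 : Ico (0:ℝ) b ⊆ Ico (-τ) b := fun s hs => ⟨by linarith [hs.1], hs.2⟩
  have hGcont : ContinuousOn G (Ico (0:ℝ) b) := by
    apply ContinuousOn.sub
    · intro t ht
      exact (Real.continuousAt_rpow_const _ p (Or.inr hp0.le)).comp_continuousWithinAt
        ((hc t (hsub1 ht)).mono hsub1).abs
    · intro t ht
      have hmem : t - τ ∈ Ico (-τ) b := ⟨by linarith [ht.1], by linarith [ht.2]⟩
      have hmap : MapsTo (fun s => s - τ) (Ico (0:ℝ) b) (Ico (-τ) b) := by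
        intro s hs
        show s - τ ∈ Ico (-τ) b
        exact ⟨by linarith [hs.1], by linarith [hs.2]⟩
      have : ContinuousWithinAt (fun s => y (s - τ)) (Ico (0:ℝ) b) t :=
        ContinuousWithinAt.comp (hc (t - τ) hmem)
          ((continuous_sub_right τ).continuousWithinAt) hmap
      exact (Real.continuousAt_rpow_const _ q (Or.inr hq.le)).comp_continuousWithinAt this.abs
  have hy0 : y 0 = φ 0 := hhist 0 ⟨by linarith, le_refl 0⟩
  have hyτ : y (-τ) = φ (-τ) := hhist (-τ) ⟨le_refl _, by linarith⟩
  have hG0 : 0 < G 0 := by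
    have : (0:ℝ) - τ = -τ := by ring
    simp only [hGdef, this, hy0, hyτ]
    have h1 : |φ (-τ)| ^ q < (φ 0) ^ p := abs_rpow_q_lt hp0 hφτ
    have h2 : |φ 0| = φ 0 := abs_of_pos (by linarith)
    rw [h2]; linarith
  have hpos : ∀ t ∈ Ico (0:ℝ) b, 0 < G t := by
    by_contra h
    push_neg at h
    obtain ⟨a₀, ha₀, ha₀G⟩ := h
    set K : Set ℝ := Icc 0 a₀ ∩ {t | G t ≤ 0} with hKdef
    have hsubK : Icc (0:ℝ) a₀ ⊆ Ico (0:ℝ) b :=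
      fun s hs => ⟨hs.1, lt_of_le_of_lt hs.2 ha₀.2⟩
    have hKc : IsClosed K :=
      (hGcont.mono hsubK).preimage_isClosed_of_isClosed isClosed_Icc isClosed_Iic
    have hKne : K.Nonempty := ⟨a₀, ⟨ha₀.1, le_refl _⟩, ha₀G⟩
    have hKbdd : BddBelow K := ⟨0, fun x hx => hx.1.1⟩
    set t₀ := sInf K with ht₀def
    have ht₀K : t₀ ∈ K := hKc.csInf_mem hKne hKbdd
    have ht₀b : t₀ < b := lt_of_le_of_lt ht₀K.1.2 ha₀.2
    have ht₀0 : 0 ≤ t₀ := ht₀K.1.1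
    have ht₀pos : 0 < t₀ := by
      rcases eq_or_lt_of_le ht₀0 with h0 | h0
      · exfalso; rw [← h0] at ht₀K; exact absurd ht₀K.2 (not_le.2 hG0)
      · exact h0
    have hlt : ∀ s, 0 ≤ s → s < t₀ → 0 < G s := by
      intro s hs hst
      by_contra hGs
      push_neg at hGs
      have hsK : s ∈ K := ⟨⟨hs, le_trans hst.le ht₀K.1.2⟩, hGs⟩
      exact absurd (csInf_le hKbdd hsK) (not_le.2 hst)
    have hmono : StrictMonoOn y (Icc 0 t₀) := by
      apply strictMonoOn_of_deriv_pos (convex_Icc 0 t₀)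
      · exact hc.mono (fun s hs => ⟨by linarith [hs.1], lt_of_le_of_lt hs.2 ht₀b⟩)
      · intro x hx
        rw [interior_Icc] at hx
        have hd := hode x ⟨hx.1, lt_trans hx.2 ht₀b⟩
        rw [hd.deriv]
        exact hlt x hx.1.le hx.2
    have h1y : φ 0 < y t₀ := by
      rw [← hy0]
      exact hmono ⟨le_refl 0, ht₀0⟩ ⟨ht₀0, le_refl t₀⟩ ht₀pos
    have hyt₀ : 1 < y t₀ := lt_of_le_of_lt hφ0 h1y
    have habs : |y t₀| = y t₀ := abs_of_pos (by linarith)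
    have hGt₀ : 0 < G t₀ := by
      simp only [hGdef, habs]
      rcases le_or_gt t₀ τ with hcase | hcase
      · have hmem : t₀ - τ ∈ Icc (-τ) (0:ℝ) := ⟨by linarith, by linarith⟩
        rw [hhist (t₀ - τ) hmem]
        have h1 : |φ (t₀ - τ)| ^ q ≤ (φ 0) ^ p := abs_rpow_q_le hp0 (hφ _ hmem)
        have h2 : (φ 0) ^ p < (y t₀) ^ p :=
          Real.rpow_lt_rpow (by linarith) h1y hp0
        linarith
      · have hmem : t₀ - τ ∈ Icc (0:ℝ) t₀ := ⟨by linarith, by linarith⟩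
        have hlt1 : y (t₀ - τ) < y t₀ :=
          hmono hmem ⟨ht₀0, le_refl _⟩ (by linarith)
        have hgt1 : φ 0 < y (t₀ - τ) := by
          rw [← hy0]
          exact hmono ⟨le_refl 0, ht₀0⟩ hmem (by linarith)
        have hys1 : 1 ≤ y (t₀ - τ) := by linarith
        have habs2 : |y (t₀ - τ)| = y (t₀ - τ) := abs_of_pos (by linarith)
        rw [habs2]
        have h1 : y (t₀ - τ) ^ q ≤ y (t₀ - τ) ^ p :=
          Real.rpow_le_rpow_of_exponent_le hys1 hqp.le
        have h2 : y (t₀ - τ) ^ p < y t₀ ^ p :=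
          Real.rpow_lt_rpow (by linarith) hlt1 hp0
        linarith
    exact absurd ht₀K.2 (not_le.2 hGt₀)
  refine ⟨hpos, ?_⟩
  apply strictMonoOn_of_deriv_pos (convex_Ico 0 b) (hc.mono hsub1)
  intro x hx
  rw [interior_Ico] at hx
  have hd := hode x hx
  rw [hd.deriv]
  exact hpos x ⟨hx.1.le, hx.2⟩

lemma delay_no_global (τ p q : ℝ) (hτ : 0 < τ) (hq : 0 < q)
    (hp : max q 1 < p)
    (φ : ℝ → ℝ) (hφ0 : 1 ≤ φ 0)
    (hφ : ∀ t ∈ Set.Icc (-τ) (0:ℝ), |φ t| ^ (q / p) ≤ φ 0)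
    (hφτ : |φ (-τ)| ^ (q / p) < φ 0) :
    ¬ ∃ y : ℝ → ℝ, DelaySolGlobal τ p q φ y := by
  rintro ⟨y, hy⟩
  have hqp : q < p := lt_of_le_of_lt (le_max_left q 1) hp
  have hp1 : 1 < p := lt_of_le_of_lt (le_max_right q 1) hp
  have hp0 : 0 < p := lt_trans one_pos hp1
  have hsol : ∀ b : ℝ, DelaySolOn τ p q φ y b := fun b =>
    ⟨hy.1.mono Ico_subset_Ici_self, hy.2.1, fun t ht => hy.2.2 t ht.1⟩
  have hmono : ∀ s t : ℝ, 0 ≤ s → s < t → y s < y t := by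
    intro s t hs hst
    exact (delay_mono τ p q hτ hq hp φ y (t+1) (by linarith) hφ0 hφ hφτ
      (hsol (t+1))).2 ⟨hs, by linarith⟩ ⟨by linarith, by linarith⟩ hst
  have hy0 : y 0 = φ 0 := hy.2.1 0 ⟨by linarith, le_refl 0⟩
  set c := y τ with hcdef
  have hc1 : 1 < c := by
    have := hmono 0 τ (le_refl 0) hτ
    rw [hy0] at this; linarith
  set ε := 1 - c ^ (q - p) with hεdef
  have hε : 0 < ε := by
    have := Real.rpow_lt_one_of_one_lt_of_neg hc1 (by linarith : q - p < 0)
    simp only [hεdef]; linarith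
  have hyc : ∀ t : ℝ, τ ≤ t → c ≤ y t := by
    intro t ht
    rcases eq_or_lt_of_le ht with h | h
    · rw [← h]
    · exact (hmono τ t hτ.le h).le
  have hypos : ∀ t : ℝ, τ ≤ t → 0 < y t := fun t ht => by
    have := hyc t ht; linarith
  have hG : ∀ t : ℝ, 2*τ ≤ t → ε * y t ^ p ≤ |y t| ^ p - |y (t - τ)| ^ q := by
    intro t ht
    have h1 : c ≤ y (t - τ) := hyc _ (by linarith)
    have h2 : y (t - τ) ≤ y t := (hmono (t - τ) t (by linarith) (by linarith)).le
    have hc0 : (0:ℝ) < c := by linarith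
    have hyt0 : 0 < y t := by linarith
    have hytτ0 : 0 < y (t - τ) := by linarith
    rw [abs_of_pos hyt0, abs_of_pos hytτ0]
    have e1 : y (t - τ) ^ q ≤ y t ^ q := Real.rpow_le_rpow hytτ0.le h2 hq.le
    have e2 : y t ^ q = y t ^ p * y t ^ (q - p) := by
      rw [← Real.rpow_add hyt0]; ring_nf
    have e3 : y t ^ (q - p) ≤ c ^ (q - p) :=
      Real.rpow_le_rpow_of_nonpos hc0 (le_trans h1 h2) (by linarith)
    have e4 : (0:ℝ) < y t ^ p := Real.rpow_pos_of_pos hyt0 p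
    have e5 : y t ^ p * y t ^ (q - p) ≤ y t ^ p * c ^ (q - p) :=
      mul_le_mul_of_nonneg_left e3 e4.le
    have : y (t - τ) ^ q ≤ y t ^ p * c ^ (q - p) := by
      calc y (t - τ) ^ q ≤ y t ^ q := e1
        _ = y t ^ p * y t ^ (q - p) := e2
        _ ≤ y t ^ p * c ^ (q - p) := e5
    have : ε * y t ^ p = y t ^ p - y t ^ p * c ^ (q - p) := by
      simp only [hεdef]; ring
    nlinarith [Real.rpow_pos_of_pos hyt0 p]
  -- blow-up via w = y ^ (1-p)
  set w : ℝ → ℝ := fun t => y t ^ (1 - p) with hwdef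
  set k := (p - 1) * ε with hkdef
  have hk : 0 < k := mul_pos (by linarith) hε
  set T := 2*τ + (w (2*τ) + 1) / k with hTdef
  have hw2τ : 0 < w (2*τ) := Real.rpow_pos_of_pos (hypos _ (by linarith)) _
  have h2T : 2*τ ≤ T := by
    have : 0 < (w (2*τ) + 1) / k := div_pos (by linarith) hk
    simp only [hTdef]; linarith
  set u : ℝ → ℝ := fun s => w s + k * s with hudef
  have hw' : ∀ t : ℝ, 2*τ ≤ t →
      HasDerivAt u ((1 - p) * y t ^ (1 - p - 1) * (|y t| ^ p - |y (t - τ)| ^ q) + k) t := by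
    intro t ht
    have hdy := hy.2.2 t (show t ∈ Ioi (0:ℝ) by simp; linarith)
    have hyt0 : 0 < y t := hypos t (by linarith)
    have hrp : HasDerivAt (fun x : ℝ => x ^ (1 - p)) ((1 - p) * y t ^ (1 - p - 1)) (y t) :=
      Real.hasDerivAt_rpow_const (Or.inl hyt0.ne')
    have hcomp : HasDerivAt w ((1 - p) * y t ^ (1 - p - 1) * (|y t| ^ p - |y (t - τ)| ^ q)) t :=
      hrp.comp t hdy
    exact (hcomp.add ((hasDerivAt_id t).const_mul k)).congr_deriv (by ring)
  have hderiv_nonpos : ∀ t : ℝ, 2*τ ≤ t →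
      (1 - p) * y t ^ (1 - p - 1) * (|y t| ^ p - |y (t - τ)| ^ q) + k ≤ 0 := by
    intro t ht
    have hyt0 : 0 < y t := hypos t (by linarith)
    have e1 : y t ^ (1 - p - 1) = y t ^ (-p) := by norm_num
    have e2 : y t ^ (-p) * y t ^ p = 1 := by
      rw [← Real.rpow_add hyt0]; simp
    have e3 : (0:ℝ) < y t ^ (-p) := Real.rpow_pos_of_pos hyt0 _
    have e4 := hG t ht
    have e5 : (0:ℝ) < y t ^ p := Real.rpow_pos_of_pos hyt0 _
    rw [e1]
    have key : ε ≤ y t ^ (-p) * (|y t| ^ p - |y (t - τ)| ^ q) := by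
      calc ε = ε * (y t ^ (-p) * y t ^ p) := by rw [e2]; ring
        _ = y t ^ (-p) * (ε * y t ^ p) := by ring
        _ ≤ y t ^ (-p) * (|y t| ^ p - |y (t - τ)| ^ q) :=
            mul_le_mul_of_nonneg_left e4 e3.le
    simp only [hkdef]
    nlinarith
  have hanti : AntitoneOn u (Icc (2*τ) T) := by
    apply antitoneOn_of_deriv_nonpos (convex_Icc _ _)
    · intro t ht
      exact (hw' t ht.1).continuousAt.continuousWithinAt
    · intro t ht
      rw [interior_Icc] at ht
      exact (hw' t ht.1.le).differentiableAt.differentiableWithinAt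
    · intro t ht
      rw [interior_Icc] at ht
      rw [(hw' t ht.1.le).deriv]
      exact hderiv_nonpos t ht.1.le
  have hUT : u T ≤ u (2*τ) :=
    hanti (left_mem_Icc.2 h2T) (right_mem_Icc.2 h2T) h2T
  have hkT : k * T = k * (2*τ) + (w (2*τ) + 1) := by
    simp only [hTdef]
    field_simp
  have hwT : 0 < w T := Real.rpow_pos_of_pos (hypos T (by linarith)) _
  simp only [hudef] at hUT
  nlinarith

lemma delay_blowup_aux (τ p q : ℝ) (hτ : 0 < τ) (hq : 0 < q)
    (hp : max q 1 < p)
    (φ : ℝ → ℝ) (hφ0 : 1 ≤ φ 0)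
    (hφ : ∀ t ∈ Set.Icc (-τ) (0:ℝ), |φ t| ^ (q / p) ≤ φ 0)
    (hφτ : |φ (-τ)| ^ (q / p) < φ 0)
    (Tstar : ℝ) (y : ℝ → ℝ) (hT : 0 < Tstar)
    (hsol : DelaySolOn τ p q φ y Tstar)
    (hmax : ¬ ∃ b : ℝ, Tstar < b ∧ ∃ z : ℝ → ℝ, DelaySolOn τ p q φ z b ∧
        ∀ t ∈ Set.Ico (-τ) Tstar, z t = y t) :
    Filter.Tendsto y (nhdsWithin Tstar (Set.Iio Tstar)) Filter.atTop := by
  classical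
  have hqp : q < p := lt_of_le_of_lt (le_max_left q 1) hp
  have hp1 : 1 < p := lt_of_le_of_lt (le_max_right q 1) hp
  have hp0 : 0 < p := lt_trans one_pos hp1
  obtain ⟨hpos, hsm⟩ :=
    delay_mono τ p q hτ hq hp φ y Tstar hT hφ0 hφ hφτ hsol
  by_cases hbdd : ∀ M : ℝ, ∃ t ∈ Ico (0:ℝ) Tstar, M < y t
  · rw [Filter.tendsto_atTop]
    intro M
    obtain ⟨t₁, ht₁, hMt₁⟩ := hbdd M
    filter_upwards [Ioo_mem_nhdsLT_of_mem (⟨ht₁.2, le_refl Tstar⟩ : Tstar ∈ Ioc t₁ Tstar)]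
      with s hs
    have : y t₁ < y s := hsm ht₁ ⟨le_trans ht₁.1 hs.1.le, hs.2⟩ hs.1
    linarith
  · exfalso
    push_neg at hbdd
    obtain ⟨M, hM⟩ := hbdd
    -- the supremum L
    set L := sSup (y '' Ico 0 Tstar) with hLdef
    have hne : (y '' Ico 0 Tstar).Nonempty := ⟨y 0, 0, ⟨le_refl 0, hT⟩, rfl⟩
    have hbddA : BddAbove (y '' Ico 0 Tstar) := by
      refine ⟨M, ?_⟩
      rintro v ⟨t, ht, rfl⟩
      exact hM t ht
    have hyleL : ∀ t ∈ Ico (0:ℝ) Tstar, y t ≤ L :=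
      fun t ht => le_csSup hbddA ⟨t, ht, rfl⟩
    have hy0 : y 0 = φ 0 := hsol.2.1 0 ⟨by linarith, le_refl 0⟩
    have hL1 : 1 < L := by
      have h1 : y 0 < y (Tstar/2) :=
        hsm ⟨le_refl 0, hT⟩ ⟨by linarith, by linarith⟩ (by linarith)
      have h2 : y (Tstar/2) ≤ L := hyleL _ ⟨by linarith, by linarith⟩
      rw [hy0] at h1; linarith
    -- y tends to L from the left
    have hyL : Tendsto y (nhdsWithin Tstar (Iio Tstar)) (nhds L) := by
      rw [tendsto_order]
      constructor
      · intro a ha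
        obtain ⟨v, ⟨t₁, ht₁, rfl⟩, hav⟩ := exists_lt_of_lt_csSup hne ha
        filter_upwards [Ioo_mem_nhdsLT_of_mem (⟨ht₁.2, le_refl Tstar⟩ : Tstar ∈ Ioc t₁ Tstar)]
          with s hs
        exact lt_trans hav (hsm ht₁ ⟨le_trans ht₁.1 hs.1.le, hs.2⟩ hs.1)
      · intro a ha
        filter_upwards [Ioo_mem_nhdsLT_of_mem (⟨hT, le_refl Tstar⟩ : Tstar ∈ Ioc 0 Tstar)]
          with s hs
        exact lt_of_le_of_lt (hyleL s ⟨hs.1.le, hs.2⟩) ha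
    -- data for Picard-Lindelöf
    set g : ℝ → ℝ := fun t => |y (t - τ)| ^ q with hgdef
    have hgcont : ContinuousOn g (Icc Tstar (Tstar + τ/2)) := by
      intro t ht
      have hmem : t - τ ∈ Ico (-τ) Tstar := ⟨by linarith [ht.1], by linarith [ht.2]⟩
      have hmap : MapsTo (fun s => s - τ) (Icc Tstar (Tstar + τ/2)) (Ico (-τ) Tstar) := by
        intro s hs
        show s - τ ∈ Ico (-τ) Tstar
        exact ⟨by linarith [hs.1], by linarith [hs.2]⟩
      have hyc : ContinuousWithinAt (fun s => y (s - τ)) (Icc Tstar (Tstar + τ/2)) t :=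
        ContinuousWithinAt.comp (hsol.1 (t - τ) hmem)
          ((continuous_sub_right τ).continuousWithinAt) hmap
      exact (Real.continuousAt_rpow_const _ q (Or.inr hq.le)).comp_continuousWithinAt hyc.abs
    obtain ⟨B, hB⟩ := isCompact_Icc.exists_bound_of_continuousOn hgcont
    have hB0 : 0 ≤ B :=
      le_trans (norm_nonneg (g Tstar)) (hB Tstar ⟨le_refl _, by linarith⟩)
    set C := (L+1) ^ p + B with hCdef
    have hLp0 : (0:ℝ) ≤ (L+1) ^ p := Real.rpow_nonneg (by linarith) p
    have hC0 : 0 ≤ C := by positivity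
    set ε := min (τ/2) (1/(C+1)) with hεdef
    have hε : 0 < ε := lt_min (by linarith) (by positivity)
    have hετ : ε ≤ τ/2 := min_le_left _ _
    have hεC : ε ≤ 1/(C+1) := min_le_right _ _
    set v : ℝ → ℝ → ℝ := fun t x => |x| ^ p - g t with hvdef
    set KL : NNReal := Real.toNNReal (p * (L+1) ^ (p-1)) with hKLdef
    have hIccsub : Icc Tstar (Tstar + ε) ⊆ Icc Tstar (Tstar + τ/2) :=
      Icc_subset_Icc (le_refl _) (by linarith)
    have hball : Metric.closedBall L 1 = Icc (L-1) (L+1) := Real.closedBall_eq_Icc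
    have hPL : IsPicardLindelof v (tmin := Tstar) (tmax := Tstar + ε)
        ⟨Tstar, le_refl _, by linarith⟩ L 1 0 C.toNNReal KL := by
      constructor
      · intro t ht
        rw [NNReal.coe_one]
        apply (convex_closedBall L 1).lipschitzOnWith_of_nnnorm_hasDerivWithin_le
          (f' := fun x => p * x ^ (p-1))
        · intro x hx
          rw [hball] at hx
          have hx0 : 0 < x := by have := hx.1; linarith
          have hbase : HasDerivWithinAt (fun z : ℝ => z ^ p - g t) (p * x ^ (p-1))
              (Metric.closedBall L 1) x := by
            simpa using ((Real.hasDerivAt_rpow_const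
              (Or.inl hx0.ne')).hasDerivWithinAt.sub_const (g t))
          apply hbase.congr
          · intro z hz
            rw [hball] at hz
            have hz0 : 0 < z := by have := hz.1; linarith
            show |z| ^ p - g t = z ^ p - g t
            rw [abs_of_pos hz0]
          · show |x| ^ p - g t = x ^ p - g t
            rw [abs_of_pos hx0]
        · intro x hx
          rw [hball] at hx
          have hx0 : 0 < x := by have := hx.1; linarith
          rw [← NNReal.coe_le_coe, coe_nnnorm, hKLdef,
            Real.coe_toNNReal _ (by positivity)]
          rw [Real.norm_eq_abs, abs_of_pos (by positivity : (0:ℝ) < p * x ^ (p-1))]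
          have : x ^ (p-1) ≤ (L+1) ^ (p-1) :=
            Real.rpow_le_rpow hx0.le hx.2 (by linarith)
          exact mul_le_mul_of_nonneg_left this hp0.le
      · intro x _
        exact continuousOn_const.sub (hgcont.mono hIccsub)
      · intro t ht x hx
        rw [NNReal.coe_one, hball] at hx
        rw [Real.coe_toNNReal _ hC0]
        have hx0 : 0 ≤ x := by have := hx.1; linarith
        have h1 : |x| ^ p ≤ (L+1) ^ p := by
          rw [abs_of_nonneg hx0]
          exact Real.rpow_le_rpow hx0 hx.2 hp0.le
        have h2 : |g t| ≤ B := by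
          have := hB t (hIccsub ht)
          rwa [Real.norm_eq_abs] at this
        have h3 : (0:ℝ) ≤ |x| ^ p := Real.rpow_nonneg (abs_nonneg x) p
        rw [Real.norm_eq_abs]
        calc |(|x| ^ p - g t)| ≤ |(|x| ^ p)| + |g t| := abs_sub _ _
          _ = |x| ^ p + |g t| := by rw [abs_of_nonneg h3]
          _ ≤ (L+1) ^ p + B := by linarith
      · have hmax' : max (Tstar + ε - Tstar) (Tstar - Tstar) = ε := by
          rw [max_eq_left (by linarith)]; ring
        rw [Real.coe_toNNReal _ hC0, NNReal.coe_one, NNReal.coe_zero, sub_zero]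
        show C * max (Tstar + ε - Tstar) (Tstar - Tstar) ≤ 1
        rw [hmax']
        calc C * ε ≤ C * (1/(C+1)) := mul_le_mul_of_nonneg_left hεC hC0
          _ ≤ 1 := by
              rw [mul_one_div, div_le_one (by linarith)]; linarith
    obtain ⟨f, hf0, hf⟩ := hPL.exists_eq_forall_mem_Icc_hasDerivWithinAt₀
    replace hf0 : f Tstar = L := hf0
    -- the glued extension
    set z : ℝ → ℝ := fun t => if t < Tstar then y t else f t with hzdef
    have hzy : ∀ t : ℝ, t < Tstar → z t = y t := fun t ht => if_pos ht
    have hzf : ∀ t : ℝ, Tstar ≤ t → z t = f t := fun t ht => if_neg (not_lt.2 ht)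
    have hzT : z Tstar = L := by rw [hzf Tstar (le_refl _), hf0]
    have hzy_ev : ∀ t : ℝ, t < Tstar → z =ᶠ[nhds t] y := by
      intro t ht
      filter_upwards [isOpen_Iio.mem_nhds (show t ∈ Iio Tstar from ht)] with s hs
      exact hzy s hs
    have hzf_ev : ∀ t : ℝ, Tstar < t → z =ᶠ[nhds t] f := by
      intro t ht
      filter_upwards [isOpen_Ioi.mem_nhds (show t ∈ Ioi Tstar from ht)] with s hs
      exact hzf s hs.le
    -- derivative of z on (0, Tstar+ε)
    have hode_z : ∀ t ∈ Ioo (0:ℝ) (Tstar + ε),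
        HasDerivAt z (|z t| ^ p - |z (t - τ)| ^ q) t := by
      intro t ht
      rcases lt_trichotomy t Tstar with hlt | heq | hgt
      · have hd := hsol.2.2 t ⟨ht.1, hlt⟩
        rw [hzy t hlt, hzy (t - τ) (by linarith)]
        exact ((hzy_ev t hlt).hasDerivAt_iff).2 hd
      · rw [heq]
        have hgT : g Tstar = |y (Tstar - τ)| ^ q := rfl
        have hval : z (Tstar - τ) = y (Tstar - τ) := hzy _ (by linarith)
        -- right derivative
        have h_r : HasDerivWithinAt z (|L| ^ p - g Tstar) (Ici Tstar) Tstar := by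
          have h1 := hf Tstar ⟨le_refl _, by linarith⟩
          rw [hf0] at h1
          have h2 : HasDerivWithinAt f (|L| ^ p - g Tstar) (Ici Tstar) Tstar :=
            h1.mono_of_mem_nhdsWithin
              (Icc_mem_nhdsGE_of_mem ⟨le_refl _, by linarith⟩)
          exact h2.congr (fun s hs => hzf s hs) (hzf Tstar (le_refl _))
        -- left derivative
        have h_l : HasDerivWithinAt z (|L| ^ p - g Tstar) (Iic Tstar) Tstar := by
          apply hasDerivWithinAt_Iic_of_tendsto_deriv (s := Ioo (Tstar/2) Tstar)
          · intro x hx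
            have hd := hsol.2.2 x ⟨by linarith [hx.1], hx.2⟩
            exact (((hzy_ev x hx.2).hasDerivAt_iff).2 hd).differentiableAt.differentiableWithinAt
          · rw [ContinuousWithinAt, hzT]
            apply Tendsto.congr' (f₁ := y)
            · filter_upwards [self_mem_nhdsWithin] with s hs
              exact (hzy s hs.2).symm
            · exact hyL.mono_left (nhdsWithin_mono _ Ioo_subset_Iio_self)
          · exact Ioo_mem_nhdsLT_of_mem ⟨by linarith, le_refl _⟩
          · -- limit of derivs
            have hshift : Tendsto (fun x => x - τ) (nhdsWithin Tstar (Iio Tstar))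
                (nhdsWithin (Tstar - τ) (Ico (-τ) Tstar)) := by
              rw [tendsto_nhdsWithin_iff]
              constructor
              · exact ((continuous_sub_right τ).tendsto Tstar).mono_left nhdsWithin_le_nhds
              · filter_upwards [Ioo_mem_nhdsLT_of_mem
                  (⟨hT, le_refl Tstar⟩ : Tstar ∈ Ioc 0 Tstar)] with x hx
                exact ⟨by linarith [hx.1], by linarith [hx.2]⟩
            have hyd : Tendsto (fun x => y (x - τ)) (nhdsWithin Tstar (Iio Tstar))
                (nhds (y (Tstar - τ))) :=
              (hsol.1 (Tstar - τ) ⟨by linarith, by linarith⟩).tendsto.comp hshift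
            have ha : Tendsto (fun x => |y x| ^ p) (nhdsWithin Tstar (Iio Tstar))
                (nhds (|L| ^ p)) :=
              ((Real.continuousAt_rpow_const _ p (Or.inr hp0.le)).comp
                continuous_abs.continuousAt).tendsto.comp hyL
            have hb2 : Tendsto (fun x => |y (x - τ)| ^ q) (nhdsWithin Tstar (Iio Tstar))
                (nhds (|y (Tstar - τ)| ^ q)) :=
              ((Real.continuousAt_rpow_const _ q (Or.inr hq.le)).comp
                continuous_abs.continuousAt).tendsto.comp hyd
            apply Tendsto.congr' (f₁ := fun x => |y x| ^ p - |y (x - τ)| ^ q)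
            · filter_upwards [Ioo_mem_nhdsLT_of_mem
                (⟨hT, le_refl Tstar⟩ : Tstar ∈ Ioc 0 Tstar)] with x hx
              have hd := hsol.2.2 x hx
              exact ((((hzy_ev x hx.2).hasDerivAt_iff).2 hd).deriv).symm
            · exact ha.sub hb2
        have := h_l.union h_r
        rw [Iic_union_Ici, hasDerivWithinAt_univ] at this
        rw [hzT, hval]
        exact this
      · have hd : HasDerivAt f (v t (f t)) t :=
          (hf t ⟨hgt.le, ht.2.le⟩).hasDerivAt (Icc_mem_nhds hgt ht.2)
        have hval : z (t - τ) = y (t - τ) := hzy _ (by linarith [ht.2])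
        rw [hzf t hgt.le, hval]
        have : v t (f t) = |f t| ^ p - |y (t - τ)| ^ q := rfl
        rw [this] at hd
        exact ((hzf_ev t hgt).hasDerivAt_iff).2 hd
    -- continuity of z
    have hcont_z : ContinuousOn z (Ico (-τ) (Tstar + ε)) := by
      intro t ht
      rcases lt_trichotomy t Tstar with hlt | heq | hgt
      · have h1 : Iio Tstar ∈ nhdsWithin t (Ico (-τ) (Tstar + ε)) :=
          mem_nhdsWithin_of_mem_nhds (isOpen_Iio.mem_nhds hlt)
        have h2 : Ico (-τ) Tstar ∈ nhdsWithin t (Ico (-τ) (Tstar + ε)) := by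
          refine mem_of_superset (inter_mem h1 self_mem_nhdsWithin) ?_
          rintro s ⟨hs1, hs2⟩
          exact ⟨hs2.1, hs1⟩
        have hcy : ContinuousWithinAt y (Ico (-τ) (Tstar + ε)) t :=
          (hsol.1 t ⟨ht.1, hlt⟩).mono_of_mem_nhdsWithin h2
        apply hcy.congr_of_eventuallyEq _ (hzy t hlt)
        filter_upwards [h1] with s hs
        exact hzy s hs
      · rw [heq, ContinuousWithinAt, hzT]
        have hsplit : Ico (-τ) (Tstar + ε) =
            (Ico (-τ) (Tstar + ε) ∩ Iio Tstar) ∪ (Ico (-τ) (Tstar + ε) ∩ Ici Tstar) := by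
          rw [← inter_union_distrib_left, Iio_union_Ici, inter_univ]
        rw [hsplit, nhdsWithin_union, tendsto_sup]
        constructor
        · apply Tendsto.congr' (f₁ := y)
          · filter_upwards [self_mem_nhdsWithin] with s hs
            exact (hzy s hs.2).symm
          · exact hyL.mono_left (nhdsWithin_mono _ inter_subset_right)
        · have hcf : Tendsto f (nhdsWithin Tstar (Ici Tstar)) (nhds L) := by
            have := (hf Tstar ⟨le_refl _, by linarith⟩).continuousWithinAt
            rw [ContinuousWithinAt, hf0] at this
            exact this.mono_left (nhdsWithin_le_of_mem
              (Icc_mem_nhdsGE_of_mem ⟨le_refl _, by linarith⟩))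
          apply Tendsto.congr' (f₁ := f)
          · filter_upwards [self_mem_nhdsWithin] with s hs
            exact (hzf s hs.2).symm
          · exact hcf.mono_left (nhdsWithin_mono _ inter_subset_right)
      · have := hode_z t ⟨by linarith, ht.2⟩
        exact this.continuousAt.continuousWithinAt
    -- z is an extension: contradiction with maximality
    apply hmax
    refine ⟨Tstar + ε, by linarith, z, ⟨hcont_z, ?_, hode_z⟩, ?_⟩
    · intro t ht
      rw [hzy t (by linarith [ht.2])]
      exact hsol.2.1 t ht
    · intro t ht
      exact hzy t ht.2

/-- let `τ > 0`, `q > 0`, `p > max(q,1)`, and let `φ` be a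
continuous history with `φ(0) ≥ 1`, `φ(0) ≥ |φ(t)|^{q/p}` on `[−τ, 0]` and
`φ(0) > |φ(−τ)|^{q/p}`. Then any solution of
`y′(t) = |y(t)|^p − |y(t−τ)|^q` with history `φ` blows up in finite time:
there is no global solution, and on the maximal interval of existence
`[0, T*)` one has `T* < ∞` and `y(t) → +∞` as `t → T*⁻`. -/
theorem delay_eq_blowup (τ p q : ℝ) (hτ : 0 < τ) (hq : 0 < q)
    (hp : max q 1 < p)
    (φ : ℝ → ℝ) (hφcont : ContinuousOn φ (Set.Icc (-τ) 0))
    (hφ0 : 1 ≤ φ 0)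
    (hφ : ∀ t ∈ Set.Icc (-τ) (0:ℝ), |φ t| ^ (q / p) ≤ φ 0)
    (hφτ : |φ (-τ)| ^ (q / p) < φ 0) :
    (¬ ∃ y : ℝ → ℝ, DelaySolGlobal τ p q φ y) ∧
    ∀ (Tstar : ℝ) (y : ℝ → ℝ), 0 < Tstar →
      DelaySolOn τ p q φ y Tstar →
      (¬ ∃ b : ℝ, Tstar < b ∧ ∃ z : ℝ → ℝ, DelaySolOn τ p q φ z b ∧
          ∀ t ∈ Set.Ico (-τ) Tstar, z t = y t) →
      Filter.Tendsto y (nhdsWithin Tstar (Set.Iio Tstar)) Filter.atTop := by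
  refine ⟨delay_no_global τ p q hτ hq hp φ hφ0 hφ hφτ, ?_⟩
  intro Tstar y hT hsol hmax
  exact delay_blowup_aux τ p q hτ hq hp φ hφ0 hφ hφτ Tstar y hT hsol hmax
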